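/- Every left |w|-Riedtmann configuration is a |w|-Hom-configuration, and every right |w|-Riedtmann configuration is a |w|-Hom-configuration. -/
import Mathlib


/- Combinatorial model of the triangulated category `T_w` generated by a `w`-spherical
object (`w ≤ -1`), via `d`-admissible arcs of the ∞-gon, where `d = w - 1`,
`|d| = 1 - w`, `|w| = -w`. -/

namespace SphericalArcs

/-- An arc is a pair of integers `(t, u)`. -/
abbrev Arc : Type := ℤ × ℤ

/-- `(t,u)` is a `d`-admissible arc: `t > u`, `t - u ≥ |d| - 1 = -w` and
`t - u ≡ -1 (mod |d|)`, i.e. `(1 - w) ∣ (t - u + 1)`. -/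
def Adm (w : ℤ) (a : Arc) : Prop :=
  a.2 < a.1 ∧ -w ≤ a.1 - a.2 ∧ (1 - w) ∣ (a.1 - a.2 + 1)

/-- `k(t,u) = (t - u + 1) / |d|`. -/
def kk (w : ℤ) (a : Arc) : ℤ := (a.1 - a.2 + 1) / (1 - w)

/-- `c ∈ F⁺(a)`: `c = (x,y)` is `d`-admissible, `x = a.1 + i·d` for some
`0 ≤ i ≤ k(a) - 1`, and `y ≤ a.2`. -/
def Fplus (w : ℤ) (a c : Arc) : Prop :=
  Adm w c ∧ (∃ i : ℤ, 0 ≤ i ∧ i ≤ kk w a - 1 ∧ c.1 = a.1 + i * (w - 1)) ∧ c.2 ≤ a.2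

/-- `c ∈ F⁻(a)`: `c = (x,y)` is `d`-admissible, `y = a.2 - i·d` for some
`0 ≤ i ≤ k(a) - 1`, and `x ≥ a.1`. -/
def Fminus (w : ℤ) (a c : Arc) : Prop :=
  Adm w c ∧ (∃ i : ℤ, 0 ≤ i ∧ i ≤ kk w a - 1 ∧ c.2 = a.2 - i * (w - 1)) ∧ a.1 ≤ c.1

/-- The Serre functor: `S(t,u) = (t - w, u - w)`. -/
def Serre (w : ℤ) (a : Arc) : Arc := (a.1 - w, a.2 - w)

/-- `Hom(a,c) ≠ 0` iff `c ∈ F⁺(a) ∪ F⁻(S(a))`. -/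
def HomNe (w : ℤ) (a c : Arc) : Prop := Fplus w a c ∨ Fminus w (Serre w a) c

/-- `Ext^j(a,b) ≠ 0` iff `Hom(a, Σ^j b) ≠ 0`, where `Σ^j b = (b.1 - j, b.2 - j)`. -/
def ExtNe (w : ℤ) (j : ℤ) (a b : Arc) : Prop := HomNe w a (b.1 - j, b.2 - j)

/-- Two arcs `(t,u)` and `(t',u')` cross if `u < u' < t < t'` or `u' < u < t' < t`. -/
def Cross (a b : Arc) : Prop :=
  (a.2 < b.2 ∧ b.2 < a.1 ∧ a.1 < b.1) ∨ (b.2 < a.2 ∧ a.2 < b.1 ∧ b.1 < a.1)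

/-- Two arcs share a vertex if `{t,u} ∩ {t',u'} ≠ ∅`. -/
def ShareVertex (a b : Arc) : Prop :=
  a.1 = b.1 ∨ a.1 = b.2 ∨ a.2 = b.1 ∨ a.2 = b.2

/-- A `|w|`-Hom-configuration: a set `H` of `d`-admissible arcs such that a
`d`-admissible arc `h` belongs to `H` iff `Ext^i(x,h) = 0` for every `x ∈ H` and
`i ∈ {w+1, …, -1}`, and `Ext^i(x,h) = 0` for every `x ∈ H \ {h}` and `i ∈ {0, w}`. -/
def IsHomConfig (w : ℤ) (H : Set Arc) : Prop :=
  (∀ h ∈ H, Adm w h) ∧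
  ∀ h : Arc, Adm w h →
    (h ∈ H ↔
      (∀ x ∈ H, ∀ i : ℤ, w + 1 ≤ i → i ≤ -1 → ¬ ExtNe w i x h) ∧
      (∀ x ∈ H, x ≠ h → ¬ ExtNe w 0 x h ∧ ¬ ExtNe w w x h))

/-- `v` is an isolated vertex of `H`: it is not an endpoint of any arc of `H`. -/
def Isolated (H : Set Arc) (v : ℤ) : Prop := ∀ a ∈ H, a.1 ≠ v ∧ a.2 ≠ v

/-- `a ∈ H` is an overarc of `v`: `a.2 < v < a.1`. -/
def IsOverarc (H : Set Arc) (a : Arc) (v : ℤ) : Prop := a ∈ H ∧ a.2 < v ∧ v < a.1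

/-- `a` is the smallest overarc of `v` in `H`. -/
def IsSmallestOverarc (H : Set Arc) (a : Arc) (v : ℤ) : Prop :=
  IsOverarc H a v ∧ ∀ b : Arc, IsOverarc H b v → b.2 ≤ a.2 ∧ a.1 ≤ b.1

/-- The set of isolated vertices of `H` having no overarc in `H`. -/
def NoOverarcIsolated (H : Set Arc) : Set ℤ :=
  {v | Isolated H v ∧ ∀ a : Arc, ¬ IsOverarc H a v}

/-- A left `|w|`-Riedtmann configuration. -/
def IsLeftRiedtmann (w : ℤ) (C : Set Arc) : Prop :=
  (∀ c ∈ C, Adm w c) ∧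
  (∀ x ∈ C, ∀ y ∈ C, x ≠ y → ∀ i : ℤ, w ≤ i → i ≤ 0 → ¬ ExtNe w i x y) ∧
  ∀ z : Arc, Adm w z → ∃ x ∈ C, ∃ i : ℤ, w + 1 ≤ i ∧ i ≤ 0 ∧ ExtNe w i x z

/-- A right `|w|`-Riedtmann configuration. -/
def IsRightRiedtmann (w : ℤ) (C : Set Arc) : Prop :=
  (∀ c ∈ C, Adm w c) ∧
  (∀ x ∈ C, ∀ y ∈ C, x ≠ y → ∀ i : ℤ, w ≤ i → i ≤ 0 → ¬ ExtNe w i x y) ∧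
  ∀ z : Arc, Adm w z → ∃ x ∈ C, ∃ i : ℤ, w + 1 ≤ i ∧ i ≤ 0 ∧ ExtNe w i z x

/-! ### Auxiliary lemmas -/

/-- Translation of an arc. -/
def tr (s : ℤ) (a : Arc) : Arc := (a.1 + s, a.2 + s)

@[simp] lemma tr_fst (s : ℤ) (a : Arc) : (tr s a).1 = a.1 + s := rfl
@[simp] lemma tr_snd (s : ℤ) (a : Arc) : (tr s a).2 = a.2 + s := rfl
@[simp] lemma serre_fst (w : ℤ) (a : Arc) : (Serre w a).1 = a.1 - w := rfl
@[simp] lemma serre_snd (w : ℤ) (a : Arc) : (Serre w a).2 = a.2 - w := rfl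

lemma kk_mul (w : ℤ) (a : Arc) (ha : Adm w a) : kk w a * (1 - w) = a.1 - a.2 + 1 :=
  Int.ediv_mul_cancel ha.2.2

@[simp] lemma kk_serre (w : ℤ) (a : Arc) : kk w (Serre w a) = kk w a := by
  simp only [kk, Serre]; congr 1; ring

@[simp] lemma kk_tr (w s : ℤ) (a : Arc) : kk w (tr s a) = kk w a := by
  simp only [kk, tr]; congr 1; ring

lemma adm_serre {w : ℤ} {a : Arc} (ha : Adm w a) : Adm w (Serre w a) := by
  obtain ⟨h1, h2, h3⟩ := ha
  refine ⟨by simp only [serre_fst, serre_snd]; linarith,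
    by simp only [serre_fst, serre_snd]; linarith, ?_⟩
  simp only [serre_fst, serre_snd]
  rw [show a.1 - w - (a.2 - w) + 1 = a.1 - a.2 + 1 by ring]
  exact h3

@[simp] lemma adm_tr (w s : ℤ) (a : Arc) : Adm w (tr s a) ↔ Adm w a := by
  simp only [Adm, tr]
  constructor <;> rintro ⟨h1, h2, h3⟩
  · refine ⟨by linarith, by linarith, ?_⟩
    rwa [show a.1 - a.2 + 1 = a.1 + s - (a.2 + s) + 1 by ring]
  · refine ⟨by linarith, by linarith, ?_⟩
    rwa [show a.1 + s - (a.2 + s) + 1 = a.1 - a.2 + 1 by ring]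

lemma adm_shift {w : ℤ} {b : Arc} (hb : Adm w b) (i : ℤ) : Adm w (b.1 - i, b.2 - i) := by
  obtain ⟨h1, h2, h3⟩ := hb
  refine ⟨by simp only; linarith, by simp only; linarith, ?_⟩
  simp only
  rwa [show b.1 - i - (b.2 - i) + 1 = b.1 - b.2 + 1 by ring]

lemma serre_tr (w s : ℤ) (a : Arc) : Serre w (tr s a) = tr s (Serre w a) := by
  simp only [Serre, tr, Prod.mk.injEq]
  constructor <;> ring

lemma serre_eq_tr (w : ℤ) (a : Arc) : Serre w a = tr (-w) a := by
  simp [Serre, tr, sub_eq_add_neg]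

lemma fplus_tr (w s : ℤ) (a c : Arc) : Fplus w (tr s a) (tr s c) ↔ Fplus w a c := by
  simp only [Fplus, tr_fst, tr_snd, adm_tr, kk_tr]
  constructor <;> rintro ⟨h1, ⟨i, hi0, hi1, hieq⟩, h3⟩ <;>
    exact ⟨h1, ⟨i, hi0, hi1, by linarith⟩, by linarith⟩

lemma fminus_tr (w s : ℤ) (a c : Arc) : Fminus w (tr s a) (tr s c) ↔ Fminus w a c := by
  simp only [Fminus, tr_fst, tr_snd, adm_tr, kk_tr]
  constructor <;> rintro ⟨h1, ⟨i, hi0, hi1, hieq⟩, h3⟩ <;>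
    exact ⟨h1, ⟨i, hi0, hi1, by linarith⟩, by linarith⟩

lemma homNe_tr (w s : ℤ) (a c : Arc) : HomNe w (tr s a) (tr s c) ↔ HomNe w a c := by
  simp only [HomNe, serre_tr]
  exact or_congr (fplus_tr w s a c) (fminus_tr w s (Serre w a) c)

lemma nn_of_mul {x D y : ℤ} (h : x * D = y) (hy : 0 ≤ y) (hD : 0 < D) : 0 ≤ x := by
  by_contra hx
  push_neg at hx
  nlinarith

/-- Key duality direction: `F⁺(a) ∋ c` iff `F⁻(S c) ∋ S a`. -/
lemma fplus_iff_fminus_serre {w : ℤ} (hw : w ≤ -1) {a c : Arc}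
    (ha : Adm w a) (hc : Adm w c) :
    Fplus w a c ↔ Fminus w (Serre w c) (Serre w a) := by
  have hka := kk_mul w a ha
  have hkc := kk_mul w c hc
  have hD : (0:ℤ) < 1 - w := by linarith
  constructor
  · rintro ⟨-, ⟨i, hi0, hi1, hieq⟩, hle⟩
    have h1 : (i - kk w a + kk w c) * (1 - w) = a.2 - c.2 := by
      linear_combination hieq - hka + hkc
    refine ⟨adm_serre ha, ⟨i - kk w a + kk w c, ?_, ?_, ?_⟩, ?_⟩
    · exact nn_of_mul h1 (by linarith) hD
    · simp only [kk_serre]; linarith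
    · simp only [serre_snd]; linear_combination -h1
    · simp only [serre_fst]
      have hi : 0 ≤ i * (1 - w) := mul_nonneg hi0 (by linarith)
      linarith
  · rintro ⟨-, ⟨n, hn0, hn1, hneq⟩, hle⟩
    simp only [serre_fst, serre_snd, kk_serre] at hneq hn1 hle
    have h2 : (n + kk w a - kk w c) * (1 - w) = a.1 - c.1 := by
      linear_combination -hneq + hka - hkc
    refine ⟨hc, ⟨n + kk w a - kk w c, ?_, ?_, ?_⟩, ?_⟩
    · exact nn_of_mul h2 (by linarith) hD
    · linarith
    · linear_combination h2
    · have hn : 0 ≤ n * (1 - w) := mul_nonneg hn0 (by linarith)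
      linarith

/-- Key duality direction: `F⁻(S a) ∋ c` iff `F⁺(c) ∋ S a`. -/
lemma fminus_serre_iff_fplus {w : ℤ} (hw : w ≤ -1) {a c : Arc}
    (ha : Adm w a) (hc : Adm w c) :
    Fminus w (Serre w a) c ↔ Fplus w c (Serre w a) := by
  rw [← fminus_tr w (-w) (Serre w a) c,
    show tr (-w) (Serre w a) = Serre w (Serre w a) from (serre_eq_tr w (Serre w a)).symm,
    show tr (-w) c = Serre w c from (serre_eq_tr w c).symm,
    fplus_iff_fminus_serre hw hc (adm_serre ha)]

/-- Combinatorial Serre duality: `Hom(a,c) ≠ 0` iff `Hom(c, S a) ≠ 0`. -/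
lemma homNe_serre {w : ℤ} (hw : w ≤ -1) {a c : Arc} (ha : Adm w a) (hc : Adm w c) :
    HomNe w a c ↔ HomNe w c (Serre w a) := by
  simp only [HomNe]
  rw [fplus_iff_fminus_serre hw ha hc, fminus_serre_iff_fplus hw ha hc, or_comm]

/-- `Ext^i(a,b) ≠ 0` iff `Ext^{w-i}(b,a) ≠ 0`. -/
lemma extNe_serre {w : ℤ} (hw : w ≤ -1) {a b : Arc} (ha : Adm w a) (hb : Adm w b)
    (i : ℤ) : ExtNe w i a b ↔ ExtNe w (w - i) b a := by
  have hb' : Adm w ((b.1 - i, b.2 - i) : Arc) := adm_shift hb i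
  have key := homNe_tr w i ((b.1 - i, b.2 - i) : Arc) (Serre w a)
  have e1 : tr i ((b.1 - i, b.2 - i) : Arc) = b := by
    simp [tr]
  have e2 : tr i (Serre w a) = ((a.1 - (w - i), a.2 - (w - i)) : Arc) := by
    simp only [tr, Serre, Prod.mk.injEq]
    constructor <;> ring
  rw [e1, e2] at key
  calc ExtNe w i a b ↔ HomNe w ((b.1 - i, b.2 - i) : Arc) (Serre w a) :=
        homNe_serre hw ha hb'
    _ ↔ ExtNe w (w - i) b a := key.symm

/-- Self-extensions vanish in degrees `w+1, …, -1`. -/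
lemma selfext_vanish {w : ℤ} (hw : w ≤ -1) {a : Arc} (ha : Adm w a) {i : ℤ}
    (hi1 : w + 1 ≤ i) (hi2 : i ≤ -1) : ¬ ExtNe w i a a := by
  rintro (⟨-, ⟨m, hm0, -, -⟩, hle⟩ | ⟨-, ⟨m, hm0, -, heq⟩, -⟩)
  · simp only at hle
    linarith
  · simp only [serre_fst, serre_snd] at heq
    have hm : 0 ≤ m * (1 - w) := mul_nonneg hm0 (by linarith)
    linarith

/-- Every left `|w|`-Riedtmann configuration is a `|w|`-Hom-configuration, and every
right `|w|`-Riedtmann configuration is a `|w|`-Hom-configuration. -/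
theorem stmt9 (w : ℤ) (hw : w ≤ -1) :
    (∀ C : Set Arc, IsLeftRiedtmann w C → IsHomConfig w C) ∧
    (∀ C : Set Arc, IsRightRiedtmann w C → IsHomConfig w C) := by
  constructor
  · rintro C ⟨hadm, hortho, hcov⟩
    refine ⟨hadm, fun h hh => ⟨fun hmem => ⟨?_, ?_⟩, ?_⟩⟩
    · intro x hx i hi1 hi2
      rcases eq_or_ne x h with rfl | hne
      · exact selfext_vanish hw hh hi1 hi2
      · exact hortho x hx h hmem hne i (by linarith) (by linarith)
    · intro x hx hne
      exact ⟨hortho x hx h hmem hne 0 (by linarith) le_rfl,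
        hortho x hx h hmem hne w le_rfl (by linarith)⟩
    · rintro ⟨h1, h2⟩
      obtain ⟨x, hx, i, hi1, hi2, hext⟩ := hcov h hh
      rcases eq_or_ne i 0 with rfl | hi0
      · rcases eq_or_ne x h with rfl | hne
        · exact hx
        · exact absurd hext (h2 x hx hne).1
      · exact absurd hext (h1 x hx i hi1 (by omega))
  · rintro C ⟨hadm, hortho, hcov⟩
    refine ⟨hadm, fun h hh => ⟨fun hmem => ⟨?_, ?_⟩, ?_⟩⟩
    · intro x hx i hi1 hi2
      rcases eq_or_ne x h with rfl | hne
      · exact selfext_vanish hw hh hi1 hi2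
      · exact hortho x hx h hmem hne i (by linarith) (by linarith)
    · intro x hx hne
      exact ⟨hortho x hx h hmem hne 0 (by linarith) le_rfl,
        hortho x hx h hmem hne w le_rfl (by linarith)⟩
    · rintro ⟨h1, h2⟩
      obtain ⟨x, hx, i, hi1, hi2, hext⟩ := hcov h hh
      have hext' : ExtNe w (w - i) x h :=
        (extNe_serre hw hh (hadm x hx) i).mp hext
      rcases eq_or_ne i 0 with rfl | hi0
      · rw [sub_zero] at hext'
        rcases eq_or_ne x h with rfl | hne
        · exact hx
        · exact absurd hext' (h2 x hx hne).2
      · exact absurd hext' (h1 x hx (w - i) (by omega) (by omega))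

end SphericalArcs
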